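/- For all integers k ≥ 1 and r ≥ 1, the local antimagic chromatic number of the edge-corona product of the star S_k with the empty graph on r vertices equals 3; that is, χ_la(S_k ⋄ K̄_r) = 3. -/

import Mathlib

/-!
Local antimagic (total) labelings and chromatic numbers, firecracker graphs,
stars, double stars, joins, and edge-corona products.
-/

open scoped Classical

noncomputable section

namespace LocalAntimagic

variable {V : Type*} [Fintype V]

/-- The weight of a vertex `u` under an edge labeling `f`: the sum of the
labels of the edges incident with `u`. -/
def weight (G : SimpleGraph V) (f : Sym2 V → ℕ) (u : V) : ℕ :=
  ∑ e ∈ G.edgeFinset, if u ∈ e then f e else 0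

/-- `f` is a local antimagic labeling of `G`: it maps the edge set of `G`
bijectively onto `{1, …, |E(G)|}` and adjacent vertices get distinct weights. -/
def IsLocalAntimagic (G : SimpleGraph V) (f : Sym2 V → ℕ) : Prop :=
  Set.BijOn f G.edgeSet (Set.Icc 1 G.edgeFinset.card) ∧
    ∀ u v, G.Adj u v → weight G f u ≠ weight G f v

/-- The number of distinct colors (vertex weights) induced by `f`. -/
def colorCount (G : SimpleGraph V) (f : Sym2 V → ℕ) : ℕ :=
  (Finset.univ.image (weight G f)).card

/-- The local antimagic chromatic number `χ_la(G)`: the least number of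
distinct induced colors over all local antimagic labelings of `G`. -/
def chiLA (G : SimpleGraph V) : ℕ :=
  sInf {c | ∃ f, IsLocalAntimagic G f ∧ colorCount G f = c}

/-- The total weight of a vertex `u` under a total labeling `(gv, ge)`:
`gv u` plus the sum of the labels of the edges incident with `u`. -/
def totalWeight (G : SimpleGraph V) (gv : V → ℕ) (ge : Sym2 V → ℕ) (u : V) : ℕ :=
  gv u + weight G ge u

/-- `(gv, ge)` is a local antimagic total labeling of `G`: together the vertex
labels and edge labels form a bijection from `V(G) ∪ E(G)` onto
`{1, …, |V(G)| + |E(G)|}`, and adjacent vertices get distinct total weights. -/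
def IsLocalAntimagicTotal (G : SimpleGraph V) (gv : V → ℕ) (ge : Sym2 V → ℕ) : Prop :=
  Set.BijOn (Sum.elim gv ge)
    (Set.range Sum.inl ∪ Sum.inr '' G.edgeSet)
    (Set.Icc 1 (Fintype.card V + G.edgeFinset.card)) ∧
    ∀ u v, G.Adj u v → totalWeight G gv ge u ≠ totalWeight G gv ge v

/-- The number of distinct colors (total vertex weights) induced by `(gv, ge)`. -/
def totalColorCount (G : SimpleGraph V) (gv : V → ℕ) (ge : Sym2 V → ℕ) : ℕ :=
  (Finset.univ.image (totalWeight G gv ge)).card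

/-- The local antimagic total chromatic number `χ_lat(G)`. -/
def chiLAT (G : SimpleGraph V) : ℕ :=
  sInf {c | ∃ gv ge, IsLocalAntimagicTotal G gv ge ∧ totalColorCount G gv ge = c}

/-- The star `S_k` with one center (`Sum.inl`) and `k` leaves (`Sum.inr`). -/
def star (k : ℕ) : SimpleGraph (Unit ⊕ Fin k) := completeBipartiteGraph Unit (Fin k)

/-- The edge-corona product `G ⋄ H`: take one copy of `G` and one disjoint
copy of `H` for each edge `e` of `G`, joining both endpoints of `e` to every
vertex of the copy of `H` assigned to `e`. -/
def edgeCorona {W : Type*} (G : SimpleGraph V) (H : SimpleGraph W) :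
    SimpleGraph (V ⊕ (G.edgeSet × W)) :=
  SimpleGraph.fromRel (fun a b =>
    match a, b with
    | Sum.inl u, Sum.inl v => G.Adj u v
    | Sum.inl u, Sum.inr (e, _) => u ∈ (e : Sym2 V)
    | Sum.inr (e, w), Sum.inr (e', w') => e = e' ∧ H.Adj w w'
    | _, _ => False)

lemma incidenceFinset_eq_image (G : SimpleGraph V) (u : V) :
    G.incidenceFinset u = (G.neighborFinset u).image (fun v => s(u, v)) := by
  ext e
  induction e with
  | h a b =>
    simp only [SimpleGraph.mem_incidenceFinset, Finset.mem_image,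
      SimpleGraph.mem_neighborFinset, SimpleGraph.mk'_mem_incidenceSet_iff]
    constructor
    · rintro ⟨hadj, h | h⟩
      · exact ⟨b, by subst h; exact hadj, by subst h; rfl⟩
      · exact ⟨a, by subst h; exact hadj.symm, by subst h; exact Sym2.eq_swap⟩
    · rintro ⟨v, hadj, hv⟩
      rw [Sym2.eq_iff] at hv
      rcases hv with ⟨rfl, rfl⟩ | ⟨rfl, rfl⟩
      · exact ⟨hadj, Or.inl rfl⟩
      · exact ⟨hadj.symm, Or.inr rfl⟩

lemma weight_eq_sum_neighbors (G : SimpleGraph V) (f : Sym2 V → ℕ) (u : V) :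
    weight G f u = ∑ v ∈ G.neighborFinset u, f s(u, v) := by
  rw [weight, ← Finset.sum_filter, ← SimpleGraph.incidenceFinset_eq_filter,
    incidenceFinset_eq_image]
  rw [Finset.sum_image]
  intro a ha b hb hab
  exact (Sym2.congr_right).mp hab



variable {k r : ℕ}

/-- The `i`-th edge of the star. -/
def E (k : ℕ) (i : Fin k) : (star k).edgeSet :=
  ⟨s(Sum.inl (), Sum.inr i), by simp [star]⟩

lemma E_inj : Function.Injective (E k) := by
  intro i j hij
  have h2 := congrArg Subtype.val hij
  simp only [E, Sym2.eq_iff] at h2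
  rcases h2 with ⟨-, h⟩ | ⟨h, -⟩
  · exact Sum.inr_injective h
  · exact absurd h (by simp)

lemma E_surj : Function.Surjective (E k) := by
  rintro ⟨e, he⟩
  induction e with
  | h a b =>
    rw [SimpleGraph.mem_edgeSet] at he
    rcases a with a | a <;> rcases b with b | b
    · exfalso; simp [star] at he
    · cases a; exact ⟨b, by apply Subtype.ext; simp [E]⟩
    · cases b; exact ⟨a, by apply Subtype.ext; simp [E, Sym2.eq_swap]⟩
    · exfalso; simp [star] at he

lemma mem_E_iff (x : Unit ⊕ Fin k) (i : Fin k) :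
    x ∈ ((E k i : Sym2 (Unit ⊕ Fin k))) ↔ x = Sum.inl () ∨ x = Sum.inr i := by
  simp [E]

/-- The equivalence between `Fin k` and the edges of the star. -/
def eEquiv (k : ℕ) : Fin k ≃ (star k).edgeSet := Equiv.ofBijective (E k) ⟨E_inj, E_surj⟩

abbrev CV (k r : ℕ) := (Unit ⊕ Fin k) ⊕ ((star k).edgeSet × Fin r)

def cG (k r : ℕ) : SimpleGraph (CV k r) := edgeCorona (star k) (⊥ : SimpleGraph (Fin r))

abbrev vc : CV k r := Sum.inl (Sum.inl ())
abbrev vL (i : Fin k) : CV k r := Sum.inl (Sum.inr i)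
abbrev vX (e : (star k).edgeSet) (w : Fin r) : CV k r := Sum.inr (e, w)

lemma adj_c_L (i : Fin k) : (cG k r).Adj vc (vL i) := by
  simp [cG, edgeCorona, SimpleGraph.fromRel_adj, vc, vL, star]

lemma adj_c_X (e : (star k).edgeSet) (w : Fin r) : (cG k r).Adj vc (vX e w) := by
  obtain ⟨i, rfl⟩ := E_surj e
  simp [cG, edgeCorona, SimpleGraph.fromRel_adj, vc, vX, mem_E_iff]

lemma adj_L_X (i : Fin k) (w : Fin r) : (cG k r).Adj (vL i) (vX (E k i) w) := by
  simp [cG, edgeCorona, SimpleGraph.fromRel_adj, vL, vX, mem_E_iff]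

lemma adj_inl_inl_iff (x y : Unit ⊕ Fin k) :
    (cG k r).Adj (Sum.inl x) (Sum.inl y) ↔ (star k).Adj x y := by
  rw [cG, edgeCorona, SimpleGraph.fromRel_adj]
  constructor
  · rintro ⟨-, h | h⟩
    · exact h
    · exact h.symm
  · intro h
    exact ⟨by simpa using h.ne, Or.inl h⟩

lemma adj_inl_inr_iff (x : Unit ⊕ Fin k) (e : (star k).edgeSet) (w : Fin r) :
    (cG k r).Adj (Sum.inl x) (Sum.inr (e, w)) ↔ x ∈ (e : Sym2 (Unit ⊕ Fin k)) := by
  rw [cG, edgeCorona, SimpleGraph.fromRel_adj]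
  constructor
  · rintro ⟨-, h | h⟩
    · exact h
    · exact h.elim
  · intro h
    exact ⟨by simp, Or.inl h⟩

lemma adj_inr_inr_iff (p q : (star k).edgeSet × Fin r) :
    ¬ (cG k r).Adj (Sum.inr p) (Sum.inr q) := by
  rw [cG, edgeCorona, SimpleGraph.fromRel_adj]
  rintro ⟨-, h | h⟩ <;> rcases p with ⟨e, w⟩ <;> rcases q with ⟨e', w'⟩ <;>
    exact (h.2).elim


def bigN (k r : ℕ) : ℕ := 2*k*r
def half (k : ℕ) : ℕ := (k+1)/2
def sig (k i : ℕ) : ℕ := if i < half k then k-1-i else i - half k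
def rho (k i : ℕ) : ℕ := if i < half k then 2*i else 2*(i-half k)+1
def perm (k r j i : ℕ) : ℕ :=
  if j = r-1 then (if r % 2 = 1 then k-1-i else rho k i)
  else if j = r-2 ∧ r % 2 = 0 then sig k i else i
def sval (k r j i : ℕ) : ℕ := j*k + perm k r j i + 1
def sideb (k r i j : ℕ) : Prop := j % 2 = 0 ∨ (j = r-1 ∧ r % 2 = 0 ∧ i < half k)
instance : ∀ k r i j, Decidable (sideb k r i j) := fun k r i j => by unfold sideb; infer_instance
def blab (k r i j : ℕ) : ℕ := if sideb k r i j then sval k r j i else bigN k r + 1 - sval k r j i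
def alab (k r i j : ℕ) : ℕ := if sideb k r i j then bigN k r + 1 - sval k r j i else sval k r j i
def tlab (k r i : ℕ) : ℕ := if r % 2 = 1 then bigN k r + 1 + i else bigN k r + 1 + sig k i
def Yval (k r : ℕ) : ℕ := if r % 2 = 1 then 2*k*r + 1 + ((r-1)/2)*(2*k*r+1-k) + r*k
  else 2*k*r + 1 + ((r-2)/2)*(2*k*r+1-k) + (2*r-1)*k

variable {k r i j i' j' : ℕ}

lemma perm_lt (hk : 1 ≤ k) (hi : i < k) : perm k r j i < k := by
  unfold perm rho sig half
  split
  · split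
    · omega
    · split <;> omega
  · split
    · split <;> omega
    · omega

lemma sval_le (hk : 1 ≤ k) (hi : i < k) (hj : j < r) : sval k r j i ≤ k*r := by
  have h1 : perm k r j i < k := perm_lt hk hi
  have h2 : j*k + k ≤ r*k := by
    have := Nat.mul_le_mul_right k (show j+1 ≤ r by omega)
    nlinarith
  unfold sval
  nlinarith

lemma sval_pos : 1 ≤ sval k r j i := by unfold sval; omega

lemma krN : k*r + k*r = bigN k r := by unfold bigN; ring

lemma alab_add_blab (hk : 1 ≤ k) (hi : i < k) (hj : j < r) :
    alab k r i j + blab k r i j = bigN k r + 1 := by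
  have h1 := sval_le hk hi hj
  have h2 := @sval_pos k r i j
  have h3 := @krN k r
  unfold alab blab
  split <;> omega

lemma blab_bounds (hk : 1 ≤ k) (hi : i < k) (hj : j < r) :
    1 ≤ blab k r i j ∧ blab k r i j ≤ bigN k r := by
  have h1 := sval_le hk hi hj
  have h2 := @sval_pos k r i j
  have h3 := @krN k r
  unfold blab
  split <;> omega

lemma alab_bounds (hk : 1 ≤ k) (hi : i < k) (hj : j < r) :
    1 ≤ alab k r i j ∧ alab k r i j ≤ bigN k r := by
  have h1 := sval_le hk hi hj
  have h2 := @sval_pos k r i j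
  have h3 := @krN k r
  unfold alab
  split <;> omega

lemma tlab_bounds (hk : 1 ≤ k) (hi : i < k) :
    bigN k r + 1 ≤ tlab k r i ∧ tlab k r i ≤ bigN k r + k := by
  unfold tlab sig half
  split
  · omega
  · split <;> omega

lemma sig_inj (hi : i < k) (hi' : i' < k) (h : sig k i = sig k i') : i = i' := by
  unfold sig half at h
  split at h <;> split at h <;> omega

lemma perm_inj (hi : i < k) (hi' : i' < k) (h : perm k r j i = perm k r j i') : i = i' := by
  unfold perm rho at h
  split at h
  · split at h
    · omega
    · split at h <;> split at h <;> omega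
  · split at h
    · exact sig_inj hi hi' h
    · omega

lemma sval_inj (hk : 1 ≤ k) (hi : i < k) (hi' : i' < k)
    (h : sval k r j i = sval k r j' i') : j = j' ∧ i = i' := by
  have h1 : perm k r j i < k := perm_lt hk hi
  have h2 : perm k r j' i' < k := perm_lt hk hi'
  have hjj : j = j' := by
    rcases lt_trichotomy j j' with hlt | heq | hgt
    · exfalso
      have : j*k + k ≤ j'*k := by
        have := Nat.mul_le_mul_right k (show j+1 ≤ j' by omega)
        nlinarith
      unfold sval at h; omega
    · exact heq
    · exfalso
      have : j'*k + k ≤ j*k := by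
        have := Nat.mul_le_mul_right k (show j'+1 ≤ j by omega)
        nlinarith
      unfold sval at h; omega
  subst hjj
  exact ⟨rfl, perm_inj hi hi' (show perm k r j i = perm k r j i' by unfold sval at h; omega)⟩

lemma tlab_inj (hi : i < k) (hi' : i' < k) (h : tlab k r i = tlab k r i') : i = i' := by
  unfold tlab at h
  split at h
  · omega
  · exact sig_inj hi hi' (by omega)

/-- small / big separation -/
lemma blab_small_or_big (hk : 1 ≤ k) (hi : i < k) (hj : j < r) :
    (blab k r i j = sval k r j i ∧ alab k r i j = bigN k r + 1 - sval k r j i) ∨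
    (blab k r i j = bigN k r + 1 - sval k r j i ∧ alab k r i j = sval k r j i) := by
  unfold blab alab
  split
  · exact Or.inl ⟨rfl, rfl⟩
  · exact Or.inr ⟨rfl, rfl⟩


lemma sum_range_pair (g : ℕ → ℕ) (n : ℕ) :
    ∑ j ∈ Finset.range (2*n), g j = ∑ s ∈ Finset.range n, (g (2*s) + g (2*s+1)) := by
  induction n with
  | zero => simp
  | succ n ih =>
    have h2 : 2*(n+1) = (2*n)+1+1 := by ring
    rw [h2, Finset.sum_range_succ, Finset.sum_range_succ, ih, Finset.sum_range_succ]
    ring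

lemma pair_val (k q r i s : ℕ) (hk : 1 ≤ k) (hi : i < k) (hs : 2*s + 1 < 2*q)
    (hq : 2*q + 1 ≤ r) (hr2 : r ≤ 2*q + 2) :
    blab k r i (2*s) + blab k r i (2*s+1) = bigN k r + 1 - k := by
  have h1 : (2*s) % 2 = 0 := by omega
  have h2 : ¬ (2*s = r - 1) := by omega
  have h3 : ¬ (2*s+1 = r - 1) := by omega
  have h4 : ¬ (2*s = r - 2 ∧ r % 2 = 0) := by rintro ⟨h, h'⟩; omega
  have h5 : ¬ (2*s+1 = r - 2 ∧ r % 2 = 0) := by rintro ⟨h, h'⟩; omega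
  have hside1 : sideb k r i (2*s) := Or.inl h1
  have hside2 : ¬ sideb k r i (2*s+1) := by
    rintro (h | ⟨h, -, -⟩)
    · omega
    · exact h3 h
  rw [blab, if_pos hside1, blab, if_neg hside2, sval, sval, perm, perm,
    if_neg h2, if_neg h4, if_neg h3, if_neg h5, bigN]
  have hb : (2*s+1)*k + i + 1 ≤ 2*k*r := by nlinarith
  have e1 : (2*s+1)*k = 2*(s*k) + k := by ring
  have e2 : (2*s)*k = 2*(s*k) := by ring
  have e3 : 2*k*r = 2*(k*r) := by ring
  rw [e1, e2, e3] at *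
  have hsk : s*k + k ≤ k*r := by nlinarith
  omega

lemma sum_blab_paired (k q r i : ℕ) (hk : 1 ≤ k) (hi : i < k)
    (hq : 2*q + 1 ≤ r) (hr2 : r ≤ 2*q + 2) :
    ∑ j ∈ Finset.range (2*q), blab k r i j = q * (bigN k r + 1 - k) := by
  rw [sum_range_pair]
  rw [Finset.sum_congr rfl (fun s hs => pair_val k q r i s hk hi
    (by have := Finset.mem_range.mp hs; omega) hq hr2)]
  rw [Finset.sum_const, smul_eq_mul, Finset.card_range]

lemma leaf_sum (hk : 1 ≤ k) (hr : 1 ≤ r) (hi : i < k) :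
    tlab k r i + ∑ j ∈ Finset.range r, blab k r i j = Yval k r := by
  obtain ⟨q, hq⟩ : ∃ q, r = 2*q+1 ∨ r = 2*q+2 := ⟨(r-1)/2, by omega⟩
  rcases hq with rfl | rfl
  · -- r odd
    have hrr : (2*q+1) % 2 = 1 := by omega
    rw [Finset.sum_range_succ, sum_blab_paired k q (2*q+1) i hk hi (by omega) (by omega)]
    have hspec : blab k (2*q+1) i (2*q) = 2*q*k + (k-1-i) + 1 := by
      unfold blab sval perm
      rw [if_pos (c := sideb k (2*q+1) i (2*q)) (Or.inl (by omega : (2*q) % 2 = 0)),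
        if_pos (by omega : 2*q = (2*q+1)-1), if_pos hrr]
    rw [hspec, tlab, if_pos hrr, Yval, if_pos hrr, bigN]
    have e0 : (2*q+1-1)/2 = q := by omega
    rw [e0]
    have e1 : 2*k*(2*q+1) = 4*(k*q) + 2*k := by ring
    have e2 : 2*q*k = 2*(k*q) := by ring
    have e3 : (2*q+1)*k = 2*(k*q) + k := by ring
    rw [e1, e2, e3]
    omega
  · -- r even
    have hrr : (2*q+2) % 2 = 0 := by omega
    have hne : ¬ ((2*q+2) % 2 = 1) := by omega
    rw [Finset.sum_range_succ, Finset.sum_range_succ,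
      sum_blab_paired k q (2*q+2) i hk hi (by omega) (by omega)]
    have hspec1 : blab k (2*q+2) i (2*q) = 2*q*k + sig k i + 1 := by
      unfold blab sval perm
      rw [if_pos (c := sideb k (2*q+2) i (2*q)) (Or.inl (by omega : (2*q) % 2 = 0)),
        if_neg (by omega : ¬ (2*q = (2*q+2)-1)), if_pos (⟨by omega, hrr⟩ : 2*q = (2*q+2)-2 ∧ (2*q+2)%2 = 0)]
    have hspec2 : blab k (2*q+2) i (2*q+1) =
        if i < half k then (2*q+1)*k + rho k i + 1
        else bigN k (2*q+2) + 1 - ((2*q+1)*k + rho k i + 1) := by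
      by_cases hih : i < half k
      · unfold blab sval perm
        rw [if_pos (c := sideb k (2*q+2) i (2*q+1)) (Or.inr ⟨by omega, hrr, hih⟩),
          if_pos (by omega : 2*q+1 = (2*q+2)-1), if_neg hne, if_pos hih]
      · unfold blab sval perm
        rw [if_neg, if_pos (by omega : 2*q+1 = (2*q+2)-1), if_neg hne, if_neg hih]
        rintro (h | ⟨-, -, h⟩)
        · omega
        · exact hih h
    rw [hspec1, hspec2, tlab, if_neg hne, Yval, if_neg hne, bigN]
    have e0 : (2*q+2-2)/2 = q := by omega
    rw [e0]
    have e1 : 2*k*(2*q+2) = 4*(k*q) + 4*k := by ring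
    have e2 : 2*q*k = 2*(k*q) := by ring
    have e3 : (2*q+1)*k = 2*(k*q) + k := by ring
    have e4 : (2*(2*q+2)-1)*k = 4*(k*q) + 3*k := by
      have : 2*(2*q+2)-1 = 4*q+3 := by omega
      rw [this]; ring
    rw [e1, e2, e3, e4]
    unfold sig rho half
    split_ifs <;> omega

lemma sig_image (k : ℕ) : (Finset.range k).image (sig k) = Finset.range k := by
  apply Finset.eq_of_subset_of_card_le
  · intro v hv
    obtain ⟨i, hi, rfl⟩ := Finset.mem_image.mp hv
    have := Finset.mem_range.mp hi
    rw [Finset.mem_range]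
    unfold sig half
    split <;> omega
  · rw [Finset.card_range, Finset.card_image_of_injOn, Finset.card_range]
    intro a ha b hb hab
    exact sig_inj (Finset.mem_range.mp ha) (Finset.mem_range.mp hb) hab

lemma sum_sig (k : ℕ) : ∑ i ∈ Finset.range k, sig k i = ∑ i ∈ Finset.range k, i := by
  conv_rhs => rw [← sig_image k]
  rw [Finset.sum_image]
  intro a ha b hb hab
  exact sig_inj (Finset.mem_range.mp ha) (Finset.mem_range.mp hb) hab

lemma sum_tlab (k r : ℕ) : ∑ i ∈ Finset.range k, tlab k r i
    = k*(bigN k r + 1) + (∑ i ∈ Finset.range k, i) := by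
  unfold tlab
  by_cases h : r % 2 = 1
  · simp only [if_pos h]
    rw [Finset.sum_add_distrib, Finset.sum_const, Finset.card_range, smul_eq_mul]
  · simp only [if_neg h]
    rw [Finset.sum_add_distrib, Finset.sum_const, Finset.card_range, smul_eq_mul, sum_sig]


lemma Yval_gt (hk : 1 ≤ k) (hr : 1 ≤ r) : bigN k r + 1 < Yval k r := by
  have hkr : 0 < r*k := Nat.mul_pos hr hk
  have hkr2 : 0 < (2*r-1)*k := Nat.mul_pos (by omega) hk
  unfold Yval bigN
  split <;> omega

lemma ineq_main (hk : 1 ≤ k) (hr : 1 ≤ r) :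
    (k+1) * Yval k r < 2*(k*(bigN k r + 1)) + k*r*(bigN k r + 1) := by
  obtain ⟨K, rfl⟩ : ∃ K, k = K+1 := ⟨k-1, by omega⟩
  obtain ⟨q, hq⟩ : ∃ q, r = 2*q+1 ∨ r = 2*q+2 := ⟨(r-1)/2, by omega⟩
  rcases hq with rfl | rfl
  · unfold Yval bigN
    rw [if_pos (by omega : (2*q+1) % 2 = 1)]
    rw [show (2*q+1-1)/2 = q from by omega]
    rw [show 2*(K+1)*(2*q+1)+1-(K+1) = 4*((K+1)*q)+(K+1)+1 from by
      have h : 2*(K+1)*(2*q+1) = 4*((K+1)*q)+2*(K+1) := by ring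
      omega]
    nlinarith [Nat.zero_le (K*q), Nat.zero_le (K*(q*q)), Nat.zero_le ((K*K)*q),
      Nat.zero_le ((K*K)*(q*q)), Nat.zero_le (K*K), Nat.zero_le (q*q), Nat.zero_le q, Nat.zero_le K]
  · unfold Yval bigN
    rw [if_neg (by omega : ¬ ((2*q+2) % 2 = 1))]
    rw [show (2*q+2-2)/2 = q from by omega]
    rw [show 2*(K+1)*(2*q+2)+1-(K+1) = 4*((K+1)*q)+3*(K+1)+1 from by
      have h : 2*(K+1)*(2*q+2) = 4*((K+1)*q)+4*(K+1) := by ring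
      omega, show 2*(2*q+2)-1 = 4*q+3 from by omega]
    nlinarith [Nat.zero_le (K*q), Nat.zero_le (K*(q*q)), Nat.zero_le ((K*K)*q),
      Nat.zero_le ((K*K)*(q*q)), Nat.zero_le (K*K), Nat.zero_le (q*q), Nat.zero_le q, Nat.zero_le K]


def idx {k : ℕ} (e : (star k).edgeSet) : Fin k := (eEquiv k).symm e

@[simp] lemma idx_E (i : Fin k) : idx (E k i) = i := by
  exact (eEquiv k).symm_apply_apply i

def F (k r : ℕ) : CV k r → CV k r → ℕ
  | Sum.inl (Sum.inl _), Sum.inl (Sum.inr i) => tlab k r i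
  | Sum.inl (Sum.inl _), Sum.inr (e, w) => alab k r (idx e) w
  | Sum.inl (Sum.inr i), Sum.inr (e, w) => blab k r i w
  | _, _ => 0

def flab (k r : ℕ) : Sym2 (CV k r) → ℕ :=
  Sym2.lift ⟨fun x y => F k r x y + F k r y x, fun x y => Nat.add_comm _ _⟩

@[simp] lemma flab_T (i : Fin k) : flab k r s(vc, vL i) = tlab k r i := by
  simp [flab, vc, vL, F]

@[simp] lemma flab_A (e : (star k).edgeSet) (w : Fin r) :
    flab k r s(vc, vX e w) = alab k r (idx e) w := by
  simp [flab, vc, vX, F]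

@[simp] lemma flab_B (i : Fin k) (e : (star k).edgeSet) (w : Fin r) :
    flab k r s(vL i, vX e w) = blab k r i w := by
  simp [flab, vL, vX, F]


lemma adj_inr_inl_iff (x : Unit ⊕ Fin k) (e : (star k).edgeSet) (w : Fin r) :
    (cG k r).Adj (Sum.inr (e, w)) (Sum.inl x) ↔ x ∈ (e : Sym2 (Unit ⊕ Fin k)) := by
  rw [SimpleGraph.adj_comm]; exact adj_inl_inr_iff x e w

lemma weight_eq_sum_univ (G : SimpleGraph V) (f : Sym2 V → ℕ) (u : V) :
    weight G f u = ∑ v : V, if G.Adj u v then f s(u, v) else 0 := by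
  rw [weight_eq_sum_neighbors, SimpleGraph.neighborFinset_eq_filter, Finset.sum_filter]

lemma weight_vX (hk : 1 ≤ k) (i : Fin k) (w : Fin r) :
    weight (cG k r) (flab k r) (vX (E k i) w) = alab k r i w + blab k r i w := by
  rw [weight_eq_sum_univ]
  rw [Fintype.sum_sum_type]
  have h2 : ∀ p : (star k).edgeSet × Fin r,
      (if (cG k r).Adj (vX (E k i) w) (Sum.inr p) then flab k r s(vX (E k i) w, Sum.inr p) else 0) = 0 := by
    intro p
    simp [vX, adj_inr_inr_iff]
  rw [Finset.sum_congr rfl (fun p _ => h2 p), Finset.sum_const_zero, Nat.add_zero]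
  rw [Fintype.sum_sum_type]
  have h3 : ∀ u : Unit,
      (if (cG k r).Adj (vX (E k i) w) (Sum.inl (Sum.inl u)) then flab k r s(vX (E k i) w, Sum.inl (Sum.inl u)) else 0)
        = alab k r i w := by
    intro u
    rw [if_pos]
    · have : s(vX (E k i) w, Sum.inl (Sum.inl u)) = s(vc, vX (E k i) w) := by
        rw [Sym2.eq_swap]
      rw [this, flab_A, idx_E]
    · exact (adj_inr_inl_iff _ _ _).mpr (by simp [mem_E_iff])
  rw [Finset.sum_congr rfl (fun u _ => h3 u)]
  simp only [Finset.sum_const, Finset.card_univ, Fintype.card_unit, one_smul]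
  have h4 : ∀ i' : Fin k,
      (if (cG k r).Adj (vX (E k i) w) (Sum.inl (Sum.inr i')) then flab k r s(vX (E k i) w, Sum.inl (Sum.inr i')) else 0)
        = if i' = i then blab k r i w else 0 := by
    intro i'
    by_cases hii : i' = i
    · subst hii
      rw [if_pos ((adj_inr_inl_iff _ _ _).mpr (by simp [mem_E_iff])), if_pos rfl]
      have : s(vX (E k i') w, Sum.inl (Sum.inr i')) = s(vL i', vX (E k i') w) := by
        rw [Sym2.eq_swap]
      rw [this, flab_B]
    · rw [if_neg, if_neg hii]
      rw [adj_inr_inl_iff]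
      simp [mem_E_iff, hii]
  rw [Finset.sum_congr rfl (fun i' _ => h4 i'), Finset.sum_ite_eq' Finset.univ i (fun _ => blab k r i w)]
  simp


lemma sum_edgeSet (g : (star k).edgeSet → ℕ) :
    ∑ e : (star k).edgeSet, g e = ∑ i : Fin k, g (E k i) :=
  (Equiv.sum_comp (eEquiv k) g).symm

lemma weight_vL (i : Fin k) :
    weight (cG k r) (flab k r) (vL i) = tlab k r i + ∑ w : Fin r, blab k r i w := by
  rw [weight_eq_sum_univ, Fintype.sum_sum_type, Fintype.sum_sum_type]
  have h1 : ∀ u : Unit,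
      (if (cG k r).Adj (vL i) (Sum.inl (Sum.inl u)) then flab k r s(vL i, Sum.inl (Sum.inl u)) else 0)
        = tlab k r i := by
    intro u
    rw [if_pos]
    · have : s((vL i : CV k r), Sum.inl (Sum.inl u)) = s(vc, vL i) := by rw [Sym2.eq_swap]
      rw [this, flab_T]
    · rw [adj_inl_inl_iff]
      simp [star]
  have h2 : ∀ i' : Fin k,
      (if (cG k r).Adj (vL i) (Sum.inl (Sum.inr i')) then flab k r s(vL i, Sum.inl (Sum.inr i')) else 0)
        = 0 := by
    intro i'
    rw [if_neg]
    rw [adj_inl_inl_iff]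
    simp [star]
  rw [Finset.sum_congr rfl (fun u _ => h1 u), Finset.sum_congr rfl (fun i' _ => h2 i')]
  simp only [Finset.sum_const, Finset.card_univ, Fintype.card_unit, one_smul,
    Finset.sum_const_zero, Nat.add_zero]
  congr 1
  rw [Fintype.sum_prod_type, sum_edgeSet (fun e => ∑ w : Fin r,
    if (cG k r).Adj (vL i) (Sum.inr (e, w)) then flab k r s(vL i, Sum.inr (e, w)) else 0)]
  have h3 : ∀ i' : Fin k, (∑ w : Fin r,
      if (cG k r).Adj (vL i) (Sum.inr (E k i', w)) then flab k r s(vL i, Sum.inr (E k i', w)) else 0)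
        = if i' = i then ∑ w : Fin r, blab k r i w else 0 := by
    intro i'
    by_cases hii : i' = i
    · subst hii
      rw [if_pos rfl]
      refine Finset.sum_congr rfl fun w _ => ?_
      rw [if_pos ((adj_inl_inr_iff _ _ _).mpr (by simp [mem_E_iff]))]
      exact flab_B i' (E k i') w
    · rw [if_neg hii]
      refine Finset.sum_eq_zero fun w _ => ?_
      rw [if_neg]
      rw [adj_inl_inr_iff]
      simp only [mem_E_iff]
      push_neg
      exact ⟨by simp, by simp [Ne.symm hii]⟩
  rw [Finset.sum_congr rfl (fun i' _ => h3 i'), Finset.sum_ite_eq' Finset.univ i]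
  simp

lemma weight_vc :
    weight (cG k r) (flab k r) (vc : CV k r) =
      (∑ i : Fin k, tlab k r i) + ∑ i : Fin k, ∑ w : Fin r, alab k r i w := by
  rw [weight_eq_sum_univ, Fintype.sum_sum_type, Fintype.sum_sum_type]
  have h1 : ∀ u : Unit,
      (if (cG k r).Adj vc (Sum.inl (Sum.inl u)) then flab k r s((vc : CV k r), Sum.inl (Sum.inl u)) else 0)
        = 0 := by
    intro u
    rw [if_neg]
    rw [adj_inl_inl_iff]
    simp [star]
  have h2 : ∀ i : Fin k,
      (if (cG k r).Adj vc (Sum.inl (Sum.inr i)) then flab k r s((vc : CV k r), Sum.inl (Sum.inr i)) else 0)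
        = tlab k r i := by
    intro i
    rw [if_pos (adj_c_L i)]
    exact flab_T i
  rw [Finset.sum_congr rfl (fun u _ => h1 u), Finset.sum_congr rfl (fun i _ => h2 i)]
  simp only [Finset.sum_const_zero, Nat.zero_add]
  congr 1
  rw [Fintype.sum_prod_type, sum_edgeSet (fun e => ∑ w : Fin r,
    if (cG k r).Adj vc (Sum.inr (e, w)) then flab k r s((vc : CV k r), Sum.inr (e, w)) else 0)]
  refine Finset.sum_congr rfl fun i _ => Finset.sum_congr rfl fun w _ => ?_
  rw [if_pos (adj_c_X (E k i) w)]
  rw [flab_A, idx_E]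


/-! ### Arithmetic about the labels -/



/-! ### Injectivity of the labels -/

lemma alab_inj (hk : 1 ≤ k) (hi : i < k) (hi' : i' < k) (hj : j < r) (hj' : j' < r)
    (h : alab k r i j = alab k r i' j') : i = i' ∧ j = j' := by
  have b1 := sval_le hk hi hj
  have b2 := sval_le hk hi' hj'
  have p1 := @sval_pos k r i j
  have p2 := @sval_pos k r i' j'
  have hN := @krN k r
  unfold alab at h
  split_ifs at h with s1 s2 s2
  · have hs : sval k r j i = sval k r j' i' := by omega
    obtain ⟨h1, h2⟩ := sval_inj hk hi hi' hs
    exact ⟨h2, h1⟩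
  · omega
  · omega
  · obtain ⟨h1, h2⟩ := sval_inj hk hi hi' h
    exact ⟨h2, h1⟩

lemma blab_inj (hk : 1 ≤ k) (hi : i < k) (hi' : i' < k) (hj : j < r) (hj' : j' < r)
    (h : blab k r i j = blab k r i' j') : i = i' ∧ j = j' := by
  have b1 := sval_le hk hi hj
  have b2 := sval_le hk hi' hj'
  have p1 := @sval_pos k r i j
  have p2 := @sval_pos k r i' j'
  have hN := @krN k r
  unfold blab at h
  split_ifs at h with s1 s2 s2
  · obtain ⟨h1, h2⟩ := sval_inj hk hi hi' h
    exact ⟨h2, h1⟩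
  · omega
  · omega
  · have hs : sval k r j i = sval k r j' i' := by omega
    obtain ⟨h1, h2⟩ := sval_inj hk hi hi' hs
    exact ⟨h2, h1⟩

lemma alab_ne_blab (hk : 1 ≤ k) (hi : i < k) (hi' : i' < k) (hj : j < r) (hj' : j' < r) :
    alab k r i j ≠ blab k r i' j' := by
  intro h
  have b1 := sval_le hk hi hj
  have b2 := sval_le hk hi' hj'
  have p1 := @sval_pos k r i j
  have p2 := @sval_pos k r i' j'
  have hN := @krN k r
  unfold alab blab at h
  split_ifs at h with s1 s2 s2
  · omega
  · have hs : sval k r j i = sval k r j' i' := by omega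
    obtain ⟨h1, h2⟩ := sval_inj hk hi hi' hs
    subst h1; subst h2
    exact s2 s1
  · obtain ⟨h1, h2⟩ := sval_inj hk hi hi' h
    subst h1; subst h2
    exact s1 s2
  · omega

/-! ### The edge set of the corona graph -/

def eT (i : Fin k) : Sym2 (CV k r) := s(vc, vL i)
def eA (i : Fin k) (w : Fin r) : Sym2 (CV k r) := s(vc, vX (E k i) w)
def eB (i : Fin k) (w : Fin r) : Sym2 (CV k r) := s(vL i, vX (E k i) w)

lemma flab_eT (i : Fin k) : flab k r (eT i) = tlab k r i := flab_T i
lemma flab_eA (i : Fin k) (w : Fin r) : flab k r (eA i w) = alab k r i w := by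
  rw [eA, flab_A, idx_E]
lemma flab_eB (i : Fin k) (w : Fin r) : flab k r (eB i w) = blab k r i w := flab_B i (E k i) w

lemma eT_mem (i : Fin k) : eT i ∈ (cG k r).edgeSet := (cG k r).mem_edgeSet.mpr (adj_c_L i)
lemma eA_mem (i : Fin k) (w : Fin r) : eA i w ∈ (cG k r).edgeSet :=
  (cG k r).mem_edgeSet.mpr (adj_c_X (E k i) w)
lemma eB_mem (i : Fin k) (w : Fin r) : eB i w ∈ (cG k r).edgeSet :=
  (cG k r).mem_edgeSet.mpr (adj_L_X i w)

lemma edge_cases {e : Sym2 (CV k r)} (he : e ∈ (cG k r).edgeSet) :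
    (∃ i, e = eT i) ∨ (∃ i w, e = eA i w) ∨ (∃ i w, e = eB i w) := by
  induction e with
  | h x y =>
    rw [SimpleGraph.mem_edgeSet] at he
    rcases x with a | ⟨e', w⟩ <;> rcases y with b | ⟨e'', w'⟩
    · rw [adj_inl_inl_iff] at he
      rcases a with a | a <;> rcases b with b | b
      · exfalso; simpa [star] using he
      · cases a; exact Or.inl ⟨b, rfl⟩
      · cases b; exact Or.inl ⟨a, by rw [eT, Sym2.eq_swap]⟩
      · exfalso; simpa [star] using he
    · rw [adj_inl_inr_iff] at he
      obtain ⟨i, rfl⟩ := E_surj e''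
      rw [mem_E_iff] at he
      rcases he with rfl | rfl
      · exact Or.inr (Or.inl ⟨i, w', rfl⟩)
      · exact Or.inr (Or.inr ⟨i, w', rfl⟩)
    · rw [adj_inr_inl_iff] at he
      obtain ⟨i, rfl⟩ := E_surj e'
      rw [mem_E_iff] at he
      rcases he with rfl | rfl
      · exact Or.inr (Or.inl ⟨i, w, by rw [eA, Sym2.eq_swap]⟩)
      · exact Or.inr (Or.inr ⟨i, w, by rw [eB, Sym2.eq_swap]⟩)
    · exact absurd he (adj_inr_inr_iff _ _)

lemma edgeFinset_eq : (cG k r).edgeFinset =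
    (Finset.univ.image fun i : Fin k => (eT i : Sym2 (CV k r))) ∪
    ((Finset.univ.image fun p : Fin k × Fin r => (eA p.1 p.2 : Sym2 (CV k r))) ∪
     (Finset.univ.image fun p : Fin k × Fin r => (eB p.1 p.2 : Sym2 (CV k r)))) := by
  ext e
  simp only [SimpleGraph.mem_edgeFinset, Finset.mem_union, Finset.mem_image,
    Finset.mem_univ, true_and]
  constructor
  · intro he
    rcases edge_cases he with ⟨i, rfl⟩ | ⟨i, w, rfl⟩ | ⟨i, w, rfl⟩
    · exact Or.inl ⟨i, rfl⟩
    · exact Or.inr (Or.inl ⟨(i, w), rfl⟩)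
    · exact Or.inr (Or.inr ⟨(i, w), rfl⟩)
  · rintro (⟨i, rfl⟩ | ⟨⟨i, w⟩, rfl⟩ | ⟨⟨i, w⟩, rfl⟩)
    · exact eT_mem i
    · exact eA_mem i w
    · exact eB_mem i w

lemma eT_injective : Function.Injective (fun i : Fin k => (eT i : Sym2 (CV k r))) := by
  intro i i' h
  simp only [eT, Sym2.eq_iff] at h
  rcases h with ⟨-, h⟩ | ⟨h, -⟩
  · simpa using h
  · exfalso; simp at h

lemma eA_injective : Function.Injective (fun p : Fin k × Fin r => (eA p.1 p.2 : Sym2 (CV k r))) := by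
  rintro ⟨i, w⟩ ⟨i', w'⟩ h
  simp only [eA, Sym2.eq_iff] at h
  rcases h with ⟨-, h⟩ | ⟨h, -⟩
  · rw [Sum.inr.injEq, Prod.mk.injEq] at h
    obtain ⟨h1, h2⟩ := h
    have := E_inj h1
    simp [this, h2]
  · exfalso; simp at h

lemma eB_injective : Function.Injective (fun p : Fin k × Fin r => (eB p.1 p.2 : Sym2 (CV k r))) := by
  rintro ⟨i, w⟩ ⟨i', w'⟩ h
  simp only [eB, Sym2.eq_iff] at h
  rcases h with ⟨h0, h⟩ | ⟨h, -⟩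
  · rw [Sum.inr.injEq, Prod.mk.injEq] at h
    obtain ⟨h1, h2⟩ := h
    simp only [Sum.inl.injEq, Sum.inr.injEq] at h0
    simp [h0, h2]
  · exfalso; simp at h

lemma card_edgeFinset_cG (hk : 1 ≤ k) (hr : 1 ≤ r) :
    (cG k r).edgeFinset.card = 2*k*r + k := by
  rw [edgeFinset_eq]
  rw [Finset.card_union_of_disjoint, Finset.card_union_of_disjoint]
  · rw [Finset.card_image_of_injective _ eT_injective,
      Finset.card_image_of_injective _ eA_injective,
      Finset.card_image_of_injective _ eB_injective]
    simp only [Finset.card_univ, Fintype.card_fin, Fintype.card_prod]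
    ring
  · rw [Finset.disjoint_left]
    rintro e he he'
    obtain ⟨⟨i, w⟩, -, rfl⟩ := Finset.mem_image.mp he
    obtain ⟨⟨i', w'⟩, -, h⟩ := Finset.mem_image.mp he'
    simp only [eA, eB, Sym2.eq_iff] at h
    rcases h with ⟨h, -⟩ | ⟨-, h⟩ <;> simp at h
  · rw [Finset.disjoint_left]
    rintro e he he'
    obtain ⟨i, -, rfl⟩ := Finset.mem_image.mp he
    simp only [Finset.mem_union, Finset.mem_image] at he'
    rcases he' with ⟨⟨i', w'⟩, -, h⟩ | ⟨⟨i', w'⟩, -, h⟩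
    · simp only [eA, eT, Sym2.eq_iff] at h
      rcases h with ⟨-, h⟩ | ⟨h, -⟩ <;> simp at h
    · simp only [eB, eT, Sym2.eq_iff] at h
      rcases h with ⟨h, -⟩ | ⟨-, h⟩ <;> simp at h


/-! ### The bijection property -/

lemma flab_mapsTo (hk : 1 ≤ k) (hr : 1 ≤ r) :
    ∀ e ∈ (cG k r).edgeSet, flab k r e ∈ Set.Icc 1 (2*k*r + k) := by
  intro e he
  have hN : bigN k r = 2*k*r := rfl
  rcases edge_cases he with ⟨i, rfl⟩ | ⟨i, w, rfl⟩ | ⟨i, w, rfl⟩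
  · rw [flab_eT]
    have := @tlab_bounds k r i hk i.isLt
    exact ⟨by omega, by omega⟩
  · rw [flab_eA]
    have := alab_bounds hk i.isLt w.isLt
    exact ⟨by omega, by omega⟩
  · rw [flab_eB]
    have := blab_bounds hk i.isLt w.isLt
    exact ⟨by omega, by omega⟩

lemma flab_injOn (hk : 1 ≤ k) (hr : 1 ≤ r) :
    Set.InjOn (flab k r) (cG k r).edgeSet := by
  intro e he e' he' hv
  have hN : bigN k r = 2*k*r := rfl
  rcases edge_cases he with ⟨i, rfl⟩ | ⟨i, w, rfl⟩ | ⟨i, w, rfl⟩ <;>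
    rcases edge_cases he' with ⟨i', rfl⟩ | ⟨i', w', rfl⟩ | ⟨i', w', rfl⟩
  · rw [flab_eT, flab_eT] at hv
    rw [show i = i' from Fin.ext (tlab_inj i.isLt i'.isLt hv)]
  · exfalso
    rw [flab_eT, flab_eA] at hv
    have h1 := @tlab_bounds k r i hk i.isLt
    have h2 := alab_bounds hk i'.isLt w'.isLt
    omega
  · exfalso
    rw [flab_eT, flab_eB] at hv
    have h1 := @tlab_bounds k r i hk i.isLt
    have h2 := blab_bounds hk i'.isLt w'.isLt
    omega
  · exfalso
    rw [flab_eA, flab_eT] at hv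
    have h1 := @tlab_bounds k r i' hk i'.isLt
    have h2 := alab_bounds hk i.isLt w.isLt
    omega
  · rw [flab_eA, flab_eA] at hv
    obtain ⟨h1, h2⟩ := alab_inj hk i.isLt i'.isLt w.isLt w'.isLt hv
    rw [show i = i' from Fin.ext h1, show w = w' from Fin.ext h2]
  · exfalso
    rw [flab_eA, flab_eB] at hv
    exact alab_ne_blab hk i.isLt i'.isLt w.isLt w'.isLt hv
  · exfalso
    rw [flab_eB, flab_eT] at hv
    have h1 := @tlab_bounds k r i' hk i'.isLt
    have h2 := blab_bounds hk i.isLt w.isLt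
    omega
  · exfalso
    rw [flab_eB, flab_eA] at hv
    exact alab_ne_blab hk i'.isLt i.isLt w'.isLt w.isLt hv.symm
  · rw [flab_eB, flab_eB] at hv
    obtain ⟨h1, h2⟩ := blab_inj hk i.isLt i'.isLt w.isLt w'.isLt hv
    rw [show i = i' from Fin.ext h1, show w = w' from Fin.ext h2]

lemma flab_image (hk : 1 ≤ k) (hr : 1 ≤ r) :
    Finset.image (flab k r) (cG k r).edgeFinset = Finset.Icc 1 (2*k*r + k) := by
  apply Finset.eq_of_subset_of_card_le
  · intro y hy
    obtain ⟨e, he, rfl⟩ := Finset.mem_image.mp hy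
    rw [SimpleGraph.mem_edgeFinset] at he
    have := flab_mapsTo hk hr e he
    rw [Finset.mem_Icc]
    exact ⟨this.1, this.2⟩
  · rw [Nat.card_Icc, Finset.card_image_of_injOn, card_edgeFinset_cG hk hr]
    · omega
    · intro a ha b hb hab
      rw [Finset.mem_coe, SimpleGraph.mem_edgeFinset] at ha hb
      exact flab_injOn hk hr ha hb hab

lemma flab_bijOn (hk : 1 ≤ k) (hr : 1 ≤ r) :
    Set.BijOn (flab k r) (cG k r).edgeSet (Set.Icc 1 ((cG k r).edgeFinset.card)) := by
  rw [card_edgeFinset_cG hk hr]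
  refine ⟨flab_mapsTo hk hr, flab_injOn hk hr, ?_⟩
  intro y hy
  have hy' : y ∈ Finset.Icc 1 (2*k*r + k) := Finset.mem_Icc.mpr ⟨hy.1, hy.2⟩
  rw [← flab_image hk hr] at hy'
  obtain ⟨e, he, rfl⟩ := Finset.mem_image.mp hy'
  rw [SimpleGraph.mem_edgeFinset] at he
  exact ⟨e, he, rfl⟩

/-! ### The induced vertex weights -/

lemma weight_vL_val (hk : 1 ≤ k) (hr : 1 ≤ r) (i : Fin k) :
    weight (cG k r) (flab k r) (vL i) = Yval k r := by
  rw [weight_vL, Fin.sum_univ_eq_sum_range (fun j => blab k r i j) r]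
  exact leaf_sum hk hr i.isLt

lemma weight_vX_val (hk : 1 ≤ k) (hr : 1 ≤ r) (e : (star k).edgeSet) (w : Fin r) :
    weight (cG k r) (flab k r) (vX e w) = bigN k r + 1 := by
  obtain ⟨i, rfl⟩ := E_surj e
  rw [weight_vX hk i w]
  exact alab_add_blab hk i.isLt w.isLt

lemma weight_vc_identity (hk : 1 ≤ k) (hr : 1 ≤ r) :
    weight (cG k r) (flab k r) vc + k * Yval k r
      = 2*(∑ i ∈ Finset.range k, tlab k r i) + k*r*(bigN k r + 1) := by
  have ht : (∑ i : Fin k, tlab k r i) = ∑ i ∈ Finset.range k, tlab k r i :=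
    Fin.sum_univ_eq_sum_range (fun i => tlab k r i) k
  have ha : (∑ i : Fin k, ∑ w : Fin r, alab k r i w)
      = ∑ i ∈ Finset.range k, ∑ j ∈ Finset.range r, alab k r i j := by
    rw [Fin.sum_univ_eq_sum_range (fun i => ∑ w : Fin r, alab k r i w) k]
    exact Finset.sum_congr rfl fun i _ => Fin.sum_univ_eq_sum_range (fun j => alab k r i j) r
  have hY : k * Yval k r = ∑ i ∈ Finset.range k,
      (tlab k r i + ∑ j ∈ Finset.range r, blab k r i j) := by
    rw [Finset.sum_congr rfl (fun i hi => leaf_sum hk hr (Finset.mem_range.mp hi)),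
      Finset.sum_const, Finset.card_range, smul_eq_mul]
  have hab : (∑ i ∈ Finset.range k, ∑ j ∈ Finset.range r, alab k r i j)
      + (∑ i ∈ Finset.range k, ∑ j ∈ Finset.range r, blab k r i j)
      = k*r*(bigN k r + 1) := by
    rw [← Finset.sum_add_distrib]
    have : ∀ i ∈ Finset.range k, ((∑ j ∈ Finset.range r, alab k r i j)
        + ∑ j ∈ Finset.range r, blab k r i j) = r * (bigN k r + 1) := by
      intro i hi
      rw [← Finset.sum_add_distrib,
        Finset.sum_congr rfl (fun j hj => alab_add_blab hk (Finset.mem_range.mp hi)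
          (Finset.mem_range.mp hj)),
        Finset.sum_const, Finset.card_range, smul_eq_mul]
    rw [Finset.sum_congr rfl this, Finset.sum_const, Finset.card_range, smul_eq_mul]
    ring
  rw [weight_vc, ht, ha, hY, Finset.sum_add_distrib]
  omega

lemma weight_vc_gt (hk : 1 ≤ k) (hr : 1 ≤ r) :
    Yval k r < weight (cG k r) (flab k r) vc := by
  have h1 := weight_vc_identity hk hr
  have h2 := ineq_main hk hr
  have h3 := sum_tlab k r
  have h4 : (k+1) * Yval k r = Yval k r + k * Yval k r := by ring
  omega


lemma inl_inl_eq_vc (u : Unit) : (Sum.inl (Sum.inl u) : CV k r) = vc := by cases u; rfl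

/-! ### The color count -/

lemma colorCount_flab (hk : 1 ≤ k) (hr : 1 ≤ r) :
    colorCount (cG k r) (flab k r) = 3 := by
  have hY := Yval_gt hk hr
  have hx := weight_vc_gt hk hr
  have i0 : Fin k := ⟨0, hk⟩
  have w0 : Fin r := ⟨0, hr⟩
  have himg : Finset.univ.image (weight (cG k r) (flab k r))
      = {weight (cG k r) (flab k r) vc, Yval k r, bigN k r + 1} := by
    apply Finset.Subset.antisymm
    · intro y hy
      obtain ⟨v, -, rfl⟩ := Finset.mem_image.mp hy
      rcases v with x | ⟨e, w⟩
      · rcases x with u | i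
        · rw [inl_inl_eq_vc u]
          simp
        · rw [show (Sum.inl (Sum.inr i) : CV k r) = vL i from rfl, weight_vL_val hk hr]
          simp
      · rw [show (Sum.inr (e, w) : CV k r) = vX e w from rfl, weight_vX_val hk hr]
        simp
    · intro y hy
      simp only [Finset.mem_insert, Finset.mem_singleton] at hy
      rcases hy with rfl | rfl | rfl
      · exact Finset.mem_image.mpr ⟨vc, Finset.mem_univ _, rfl⟩
      · exact Finset.mem_image.mpr ⟨vL i0, Finset.mem_univ _, weight_vL_val hk hr i0⟩
      · exact Finset.mem_image.mpr ⟨vX (E k i0) w0, Finset.mem_univ _,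
          weight_vX_val hk hr (E k i0) w0⟩
  rw [colorCount, himg]
  rw [Finset.card_insert_of_notMem, Finset.card_insert_of_notMem, Finset.card_singleton]
  · simp only [Finset.mem_singleton]
    omega
  · simp only [Finset.mem_insert, Finset.mem_singleton]
    push_neg
    constructor <;> omega

lemma flab_adj_ne (hk : 1 ≤ k) (hr : 1 ≤ r) :
    ∀ u v, (cG k r).Adj u v →
      weight (cG k r) (flab k r) u ≠ weight (cG k r) (flab k r) v := by
  have hY := Yval_gt hk hr
  have hx := weight_vc_gt hk hr
  intro u v hadj
  rcases u with x | ⟨e, w⟩ <;> rcases v with x' | ⟨e', w'⟩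
  · rw [adj_inl_inl_iff] at hadj
    rcases x with u | i <;> rcases x' with u' | i'
    · exfalso; simpa [star] using hadj
    · rw [inl_inl_eq_vc u,
        show (Sum.inl (Sum.inr i') : CV k r) = vL i' from rfl, weight_vL_val hk hr]
      omega
    · rw [inl_inl_eq_vc u',
        show (Sum.inl (Sum.inr i) : CV k r) = vL i from rfl, weight_vL_val hk hr]
      omega
    · exfalso; simpa [star] using hadj
  · rw [show (Sum.inr (e', w') : CV k r) = vX e' w' from rfl, weight_vX_val hk hr]
    rcases x with u | i
    · rw [inl_inl_eq_vc u]
      omega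
    · rw [show (Sum.inl (Sum.inr i) : CV k r) = vL i from rfl, weight_vL_val hk hr]
      omega
  · rw [show (Sum.inr (e, w) : CV k r) = vX e w from rfl, weight_vX_val hk hr]
    rcases x' with u | i
    · rw [inl_inl_eq_vc u]
      omega
    · rw [show (Sum.inl (Sum.inr i) : CV k r) = vL i from rfl, weight_vL_val hk hr]
      omega
  · exact absurd hadj (adj_inr_inr_iff _ _)



/-- For all integers `k ≥ 1` and `r ≥ 1`, the local antimagic chromatic number
of the edge-corona product of the star `S_k` with the empty graph on `r`
vertices equals 3: `χ_la(S_k ⋄ K̄_r) = 3`. -/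
theorem chiLA_star_edgeCorona_empty {k r : ℕ} (hk : 1 ≤ k) (hr : 1 ≤ r) :
    chiLA (edgeCorona (star k) (⊥ : SimpleGraph (Fin r))) = 3 := by
  show chiLA (cG k r) = 3
  have h3 : 3 ∈ {c | ∃ f, IsLocalAntimagic (cG k r) f ∧ colorCount (cG k r) f = c} :=
    ⟨flab k r, ⟨flab_bijOn hk hr, flab_adj_ne hk hr⟩, colorCount_flab hk hr⟩
  refine le_antisymm (Nat.sInf_le h3) (le_csInf ⟨3, h3⟩ ?_)
  rintro c ⟨f, ⟨-, hadj⟩, rfl⟩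
  have i0 : Fin k := ⟨0, hk⟩
  have w0 : Fin r := ⟨0, hr⟩
  have h1 := hadj _ _ (adj_c_L i0)
  have h2 := hadj _ _ (adj_c_X (E k i0) w0)
  have h3' := hadj _ _ (adj_L_X i0 w0)
  have hsub : ({weight (cG k r) f vc, weight (cG k r) f (vL i0),
      weight (cG k r) f (vX (E k i0) w0)} : Finset ℕ)
      ⊆ Finset.univ.image (weight (cG k r) f) := by
    intro y hy
    simp only [Finset.mem_insert, Finset.mem_singleton] at hy
    rcases hy with rfl | rfl | rfl
    · exact Finset.mem_image.mpr ⟨vc, Finset.mem_univ _, rfl⟩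
    · exact Finset.mem_image.mpr ⟨vL i0, Finset.mem_univ _, rfl⟩
    · exact Finset.mem_image.mpr ⟨vX (E k i0) w0, Finset.mem_univ _, rfl⟩
  have hcard : ({weight (cG k r) f vc, weight (cG k r) f (vL i0),
      weight (cG k r) f (vX (E k i0) w0)} : Finset ℕ).card = 3 := by
    rw [Finset.card_insert_of_notMem, Finset.card_insert_of_notMem,
      Finset.card_singleton]
    · simpa using h3'
    · simp only [Finset.mem_insert, Finset.mem_singleton]
      push_neg
      exact ⟨h1, h2⟩
  rw [colorCount]
  calc 3 = ({weight (cG k r) f vc, weight (cG k r) f (vL i0),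
      weight (cG k r) f (vX (E k i0) w0)} : Finset ℕ).card := hcard.symm
    _ ≤ (Finset.univ.image (weight (cG k r) f)).card := Finset.card_le_card hsub


end LocalAntimagic
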